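/- arXiv:2406.11279 — 5 statements merged into one kernel-verified Lean document; each statement's English description precedes it below -/
import Mathlib

section
/- Let η = r e^{iφ} with r > e and π/4 < φ < π/2 − (log r)/r². Then |2^{2πiη²}| ≤ exp(−2πr² (log 2) sin(2 log r / r²)) ≤ exp(−π (log 2) (log r)) < 1/r. -/
set_option maxHeartbeats 1000000

theorem stmt_1 (r φ : ℝ) (hr : Real.exp 1 < r)
    (hφ1 : Real.pi / 4 < φ) (hφ2 : φ < Real.pi / 2 - Real.log r / r ^ 2) :
    ‖(2 : ℂ) ^ (2 * (Real.pi : ℂ) * Complex.I *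
        ((r : ℂ) * Complex.exp (Complex.I * (φ : ℂ))) ^ 2)‖ ≤
      Real.exp (-(2 * Real.pi * r ^ 2 * Real.log 2 * Real.sin (2 * Real.log r / r ^ 2))) ∧
    Real.exp (-(2 * Real.pi * r ^ 2 * Real.log 2 * Real.sin (2 * Real.log r / r ^ 2))) ≤
      Real.exp (-(Real.pi * Real.log 2 * Real.log r)) ∧
    Real.exp (-(Real.pi * Real.log 2 * Real.log r)) < 1 / r := by
  have hr0 : (0 : ℝ) < r := lt_trans (Real.exp_pos 1) hr
  have hL : 1 < Real.log r := by
    have := Real.log_lt_log (Real.exp_pos 1) hr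
    simpa using this
  set L := Real.log r with hLdef
  have hLpos : 0 < L := by linarith
  have hpi : (3 : ℝ) < Real.pi := Real.pi_gt_three
  have hlog2 : (0.6931471803 : ℝ) < Real.log 2 := Real.log_two_gt_d9
  have h2r : (2 : ℝ) < r := by
    have := Real.exp_one_gt_d9
    nlinarith
  have hLr : L < r := by
    have := Real.log_le_sub_one_of_pos hr0
    linarith
  set x := 2 * L / r ^ 2 with hxdef
  have hx0 : 0 < x := by positivity
  have hx1 : x < 1 := by
    rw [hxdef, div_lt_one (by positivity)]
    nlinarith
  clear_value L x
  have hxlin : x = 2 * (L / r ^ 2) := by rw [hxdef]; ring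
  have hLr2 : 0 < L / r ^ 2 := by positivity
  have hφπ : φ < Real.pi / 2 := by linarith
  have hφx : 2 * φ + x < Real.pi := by
    rw [hxlin]; linarith
  -- compute the real part
  have hw : (2 * (Real.pi : ℂ) * Complex.I *
        ((r : ℂ) * Complex.exp (Complex.I * (φ : ℂ))) ^ 2).re
      = -(2 * Real.pi * r ^ 2 * Real.sin (2 * φ)) := by
    rw [mul_comm Complex.I (φ : ℂ), Complex.exp_mul_I]
    simp [Complex.mul_re, Complex.mul_im, pow_two, Real.sin_two_mul,
      Complex.cos_ofReal_re, Complex.sin_ofReal_re]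
    ring
  have hb : ((2 : ℝ) : ℂ) = (2 : ℂ) := by norm_num
  have habs : ‖(2 : ℂ) ^ (2 * (Real.pi : ℂ) * Complex.I *
        ((r : ℂ) * Complex.exp (Complex.I * (φ : ℂ))) ^ 2)‖
      = Real.exp (-(2 * Real.pi * r ^ 2 * Real.sin (2 * φ)) * Real.log 2) := by
    rw [← hb, Complex.norm_cpow_eq_rpow_re_of_pos (by norm_num), hb, hw,
      Real.rpow_def_of_pos (by norm_num)]
    ring_nf
  -- sin 2φ ≥ sin x
  have hsin_mono : Real.sin x ≤ Real.sin (2 * φ) := by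
    rw [← Real.sin_pi_sub (2 * φ)]
    apply Real.strictMonoOn_sin.monotoneOn
    · constructor <;> nlinarith
    · constructor <;> nlinarith
    · linarith
  have hsinx_pos : 0 < Real.sin x := Real.sin_pos_of_pos_of_lt_pi hx0 (by nlinarith)
  have hc : (0 : ℝ) ≤ 2 * Real.pi * r ^ 2 * Real.log 2 := by positivity
  refine ⟨?_, ?_, ?_⟩
  · rw [habs, Real.exp_le_exp]
    nlinarith [mul_le_mul_of_nonneg_left hsin_mono hc]
  · rw [Real.exp_le_exp]
    have hcube : x - x ^ 3 / 4 < Real.sin x := by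
      have := Real.sin_gt_sub_cube hx0; nlinarith [pow_pos hx0 3]
    have h4 : 2 * r ^ 2 * x = 4 * L := by rw [hxdef]; field_simp; ring
    have h5 : r ^ 2 * x ^ 3 = 2 * x ^ 2 * L := by rw [hxdef]; field_simp
    have hx2 : x ^ 2 < 1 := by nlinarith
    have hm := mul_lt_mul_of_pos_left hcube (show (0:ℝ) < 2 * r ^ 2 by positivity)
    have heq : 2 * r ^ 2 * (x - x ^ 3 / 4) = 4 * L - x ^ 2 * L := by
      linear_combination h4 - h5 / 2
    have hx2L : x ^ 2 * L < L := by nlinarith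
    have key : L ≤ 2 * r ^ 2 * Real.sin x := by linarith
    linarith [mul_le_mul_of_nonneg_left key
      (show (0:ℝ) ≤ Real.pi * Real.log 2 by positivity)]
  · have h1r : (1 : ℝ) / r = Real.exp (-L) := by
      rw [Real.exp_neg, hLdef, Real.exp_log hr0, one_div]
    rw [h1r, Real.exp_lt_exp]
    linarith [mul_pos (show (0:ℝ) < Real.pi * Real.log 2 - 1 by nlinarith) hLpos]
end

section
/- Let u(η) = 2η² log η − η² + η + i(log 2)/(2π) − 1/8 be holomorphic on the upper half-plane (principal log). Suppose a is in the upper half-plane with |a| > 4 and u(a) = 2n for some integer n. Then for all η on the circle |η − a| = 1 (still in the upper half-plane, assuming the closed unit disc around a lies in the domain), one has |u(η) − 2n| ≥ 4|a||log a| − 3 − 2|log a| − 1/|a| > 1 + |a|. -/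
/-- The function u(η) = 2η² log η − η² + η + i(log 2)/(2π) − 1/8, with the principal
branch of the complex logarithm. -/
noncomputable def u (η : ℂ) : ℂ :=
  2 * η ^ 2 * Complex.log η - η ^ 2 + η +
    Complex.I * (Real.log 2 : ℂ) / (2 * (Real.pi : ℂ)) - 1 / 8

lemma stmt_10_identity (a L l z : ℂ) :
    2*(a + a*z)^2*(l + L) - (a + a*z)^2 + (a + a*z) - (2*a^2*l - a^2 + a)
    = (4*a*l + 1)*(a*z) + (2*l + 2)*(a*z)^2
      + ((2/3)*z*(a*z)^2 - (1/6)*z^2*(a*z)^2 - (1/3)*z^3*(a*z)^2 - (1/2)*z^4*(a*z)^2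
        + 2*(a + a*z)^2*(L - (z - z^2/2 + z^3/3 - z^4/4))) := by ring

lemma stmt_10_real_bound (r : ℝ) (hr : 4 < r) :
    2/(3*r) + 1/(6*r^2) + 1/(3*r^3) + 1/(2*r^4)
      + 2*(r+1)^2*((1/r)^5*(1-1/r)⁻¹/5) ≤ 1/r := by
  have hr0 : (0:ℝ) < r := by linarith
  have hr1 : (0:ℝ) < r - 1 := by linarith
  have e : 1/r - (2/(3*r) + 1/(6*r^2) + 1/(3*r^3) + 1/(2*r^4)
      + 2*(r+1)^2*((1/r)^5*(1-1/r)⁻¹/5))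
      = (10*r^4 - 15*r^3 - 17*r^2 - 29*r + 3)/(30*r^4*(r-1)) := by
    have h1 : (1:ℝ) - 1/r = (r-1)/r := by field_simp
    rw [h1]
    field_simp
    ring
  have h4 : (0:ℝ) ≤ r - 4 := by linarith
  have hnum : (0:ℝ) < 10*r^4 - 15*r^3 - 17*r^2 - 29*r + 3 := by
    nlinarith [mul_nonneg (pow_nonneg hr0.le 3) h4, mul_nonneg (sq_nonneg r) h4,
      mul_nonneg hr0.le h4]
  have : (0:ℝ) ≤ (10*r^4 - 15*r^3 - 17*r^2 - 29*r + 3)/(30*r^4*(r-1)) := by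
    apply div_nonneg hnum.le; positivity
  linarith [e ▸ this]

set_option maxHeartbeats 1000000 in
theorem stmt_10 (a : ℂ) (him : 0 < a.im) (ha : 4 < ‖a‖)
    (hlog : 1 ≤ ‖Complex.log a‖)
    (hdisc : ∀ z : ℂ, ‖z - a‖ ≤ 1 → 0 < z.im)
    (n : ℤ) (hu : u a = 2 * n) :
    ∀ η : ℂ, ‖η - a‖ = 1 →
      4 * ‖a‖ * ‖Complex.log a‖ - 3 -
          2 * ‖Complex.log a‖ - 1 / ‖a‖ ≤
        ‖u η - 2 * n‖ ∧
      1 + ‖a‖ <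
        4 * ‖a‖ * ‖Complex.log a‖ - 3 -
          2 * ‖Complex.log a‖ - 1 / ‖a‖ := by
  intro η hη
  set r := ‖a‖ with hr_def
  set Λ := ‖Complex.log a‖ with hΛ_def
  have hr0 : (0:ℝ) < r := by linarith
  have ha0 : a ≠ 0 := by
    intro h
    have h5 := ha
    rw [hr_def, h] at h5
    simp at h5
    linarith
  have hηim : 0 < η.im := hdisc η (le_of_eq hη)
  have hη0 : η ≠ 0 := by
    intro h; rw [h] at hηim; simp at hηim
  set z : ℂ := (η - a) / a with hz_def
  have hzabs : ‖z‖ = 1 / r := by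
    rw [hz_def, norm_div, hη]
  have hz4 : ‖z‖ < 1/4 := by
    rw [hzabs]; rw [div_lt_div_iff₀ hr0 (by norm_num)]; linarith
  have h1z : (1:ℂ) + z = η / a := by
    rw [hz_def]; field_simp; ring
  have h1z0 : (1:ℂ) + z ≠ 0 := by
    rw [h1z]; exact div_ne_zero hη0 ha0
  -- log split
  have hsplit : Complex.log η = Complex.log a + Complex.log (1 + z) := by
    have h1 : Complex.exp (Complex.log η - Complex.log a) = 1 + z := by
      rw [Complex.exp_sub, Complex.exp_log hη0, Complex.exp_log ha0, h1z]
    have h2 : Complex.exp (Complex.log η - Complex.log a)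
        = Complex.exp (Complex.log (1 + z)) := by
      rw [h1, Complex.exp_log h1z0]
    obtain ⟨k, hk⟩ := Complex.exp_eq_exp_iff_exists_int.mp h2
    have him1 : (Complex.log η - Complex.log a).im
        = (Complex.log (1+z)).im + (k:ℝ) * (2 * Real.pi) := by
      have := congrArg Complex.im hk
      simpa [Complex.sub_im, Complex.add_im, Complex.mul_im, Complex.mul_re] using this
    have hargη0 : 0 ≤ Complex.arg η := Complex.arg_nonneg_iff.mpr hηim.le
    have hargηπ : Complex.arg η < Real.pi :=
      Complex.arg_lt_pi_iff.mpr (Or.inr (ne_of_gt hηim))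
    have harga0 : 0 ≤ Complex.arg a := Complex.arg_nonneg_iff.mpr him.le
    have hargaπ : Complex.arg a < Real.pi :=
      Complex.arg_lt_pi_iff.mpr (Or.inr (ne_of_gt him))
    have hre1z : 0 < (1 + z).re := by
      have : |z.re| ≤ ‖z‖ := Complex.abs_re_le_norm z
      have : (1 + z).re = 1 + z.re := by simp
      rw [this]
      have h1 := Complex.abs_re_le_norm z
      have h2 := abs_le.mp (h1.trans hz4.le)
      linarith [h2.1]
    have harg1z : |Complex.arg (1 + z)| < Real.pi / 2 :=
      Complex.abs_arg_lt_pi_div_two_iff.mpr (Or.inl hre1z)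
    have hπ : (0:ℝ) < Real.pi := Real.pi_pos
    have hdim : (Complex.log η - Complex.log a).im = Complex.arg η - Complex.arg a := by
      simp [Complex.sub_im, Complex.log_im]
    have h1zim : (Complex.log (1+z)).im = Complex.arg (1+z) := Complex.log_im _
    have hk0 : k = 0 := by
      by_contra hk0
      have hk1 : (1:ℝ) ≤ |(k:ℝ)| := by
        have : (1:ℤ) ≤ |k| := Int.one_le_abs hk0
        calc (1:ℝ) ≤ (|k| : ℤ) := by exact_mod_cast this
        _ = |(k:ℝ)| := by push_cast; rfl
      have habs : |(k:ℝ) * (2 * Real.pi)| < 2 * Real.pi := by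
        have : (k:ℝ) * (2 * Real.pi)
            = (Complex.arg η - Complex.arg a) - Complex.arg (1+z) := by
          rw [← hdim, ← h1zim]; linarith [him1]
        rw [this]
        have h1 := abs_lt.mp harg1z
        have : |(Complex.arg η - Complex.arg a) - Complex.arg (1+z)| < 3 * Real.pi / 2 := by
          rw [abs_lt]; constructor <;> nlinarith [h1.1, h1.2]
        linarith
      rw [abs_mul] at habs
      have h2π : |2 * Real.pi| = 2 * Real.pi := abs_of_pos (by linarith)
      rw [h2π] at habs
      nlinarith
    rw [hk0] at hk
    have h3 : Complex.log η - Complex.log a = Complex.log (1+z) := by simpa using hk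
    linear_combination h3
  -- Taylor expansion pieces
  have hnorm_a : ‖a‖ = r := by rfl
  have hnorm_w : ‖η - a‖ = 1 := by exact hη
  set E : ℂ := Complex.log (1 + z) - (z - z^2/2 + z^3/3 - z^4/4) with hE_def
  have hEbound : ‖E‖ ≤ (1/r)^5 * (1 - 1/r)⁻¹ / 5 := by
    have hz1 : ‖z‖ < 1 := by
      linarith [hz4]
    have h := Complex.norm_log_sub_logTaylor_le 4 hz1
    have hLT : Complex.logTaylor 5 z = z - z^2/2 + z^3/3 - z^4/4 := by
      simp [Complex.logTaylor, Finset.sum_range_succ]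
      ring
    rw [hLT] at h
    have hzn : ‖z‖ = 1/r := by exact hzabs
    rw [hzn] at h
    rw [hE_def]
    convert h using 2
    norm_num
  have hηn : ‖η‖ ≤ r + 1 := by
    calc ‖η‖ = ‖a + (η - a)‖ := by ring_nf
    _ ≤ ‖a‖ + ‖η - a‖ := norm_add_le _ _
    _ = r + 1 := by rw [hnorm_a, hnorm_w]
  have hη_eq : η = a + a*z := by rw [hz_def]; field_simp; ring
  have haz : a*z = η - a := by rw [hz_def]; field_simp
  have hnaz : ‖a*z‖ = 1 := by rw [haz]; exact hnorm_w
  have hzn : ‖z‖ = 1/r := by exact hzabs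
  -- the key algebraic identity
  have hid : u η - 2*(n:ℂ) = (4*a*Complex.log a + 1)*(a*z)
      + (2*Complex.log a + 2)*(a*z)^2
      + ((2/3)*z*(a*z)^2 - (1/6)*z^2*(a*z)^2 - (1/3)*z^3*(a*z)^2 - (1/2)*z^4*(a*z)^2
        + 2*η^2*E) := by
    rw [← hu, hE_def]
    have hconst : u η - u a
        = 2*η^2*Complex.log η - η^2 + η - (2*a^2*Complex.log a - a^2 + a) := by
      simp only [u]; ring
    rw [hconst, hsplit, hη_eq]
    linear_combination stmt_10_identity a (Complex.log (1+z)) (Complex.log a) z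
  set R : ℂ := (2/3)*z*(a*z)^2 - (1/6)*z^2*(a*z)^2 - (1/3)*z^3*(a*z)^2
      - (1/2)*z^4*(a*z)^2 + 2*η^2*E with hR_def
  -- bound on the remainder R
  have hRabs : ‖R‖ ≤ 1/r := by
    have n1 : ‖(2/3 : ℂ)*z*(a*z)^2‖ = 2/(3*r) := by
      rw [norm_mul, norm_mul, norm_pow, hnaz, hzn]
      norm_num
      try ring
    have n2 : ‖(1/6 : ℂ)*z^2*(a*z)^2‖ = 1/(6*r^2) := by
      rw [norm_mul, norm_mul, norm_pow, norm_pow, hnaz, hzn]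
      rw [div_pow]
      norm_num
      try ring
    have n3 : ‖(1/3 : ℂ)*z^3*(a*z)^2‖ = 1/(3*r^3) := by
      rw [norm_mul, norm_mul, norm_pow, norm_pow, hnaz, hzn]
      rw [div_pow]
      norm_num
      try ring
    have n4 : ‖(1/2 : ℂ)*z^4*(a*z)^2‖ = 1/(2*r^4) := by
      rw [norm_mul, norm_mul, norm_pow, norm_pow, hnaz, hzn]
      rw [div_pow]
      norm_num
      try ring
    have n5 : ‖(2:ℂ)*η^2*E‖ ≤ 2*(r+1)^2*((1/r)^5*(1-1/r)⁻¹/5) := by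
      rw [norm_mul, norm_mul, norm_pow]
      have h2 : ‖(2:ℂ)‖ = 2 := by simp
      rw [h2]
      have hη0' : (0:ℝ) ≤ ‖η‖ := norm_nonneg _
      have hE0 : (0:ℝ) ≤ ‖E‖ := norm_nonneg _
      have h7 := mul_le_mul (pow_le_pow_left₀ hη0' hηn 2) hEbound hE0 (by positivity)
      linarith [h7]
    have tri : ‖R‖ ≤ ‖(2/3 : ℂ)*z*(a*z)^2‖ + ‖(1/6 : ℂ)*z^2*(a*z)^2‖
        + ‖(1/3 : ℂ)*z^3*(a*z)^2‖ + ‖(1/2 : ℂ)*z^4*(a*z)^2‖ + ‖(2:ℂ)*η^2*E‖ := by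
      rw [hR_def]
      calc ‖(2/3 : ℂ)*z*(a*z)^2 - (1/6)*z^2*(a*z)^2 - (1/3)*z^3*(a*z)^2
            - (1/2)*z^4*(a*z)^2 + 2*η^2*E‖
          ≤ ‖(2/3 : ℂ)*z*(a*z)^2 - (1/6)*z^2*(a*z)^2 - (1/3)*z^3*(a*z)^2
            - (1/2)*z^4*(a*z)^2‖ + ‖(2:ℂ)*η^2*E‖ := norm_add_le _ _
        _ ≤ ‖(2/3 : ℂ)*z*(a*z)^2 - (1/6)*z^2*(a*z)^2 - (1/3)*z^3*(a*z)^2‖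
            + ‖(1/2 : ℂ)*z^4*(a*z)^2‖ + ‖(2:ℂ)*η^2*E‖ := by
            gcongr ?_ + _; exact norm_sub_le _ _
        _ ≤ ‖(2/3 : ℂ)*z*(a*z)^2 - (1/6)*z^2*(a*z)^2‖ + ‖(1/3 : ℂ)*z^3*(a*z)^2‖
            + ‖(1/2 : ℂ)*z^4*(a*z)^2‖ + ‖(2:ℂ)*η^2*E‖ := by
            gcongr ?_ + _ + _; exact norm_sub_le _ _
        _ ≤ ‖(2/3 : ℂ)*z*(a*z)^2‖ + ‖(1/6 : ℂ)*z^2*(a*z)^2‖ + ‖(1/3 : ℂ)*z^3*(a*z)^2‖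
            + ‖(1/2 : ℂ)*z^4*(a*z)^2‖ + ‖(2:ℂ)*η^2*E‖ := by
            gcongr ?_ + _ + _ + _; exact norm_sub_le _ _
    rw [n1, n2, n3, n4] at tri
    have := stmt_10_real_bound r ha
    linarith [n5]
  -- main term lower bound
  have hM1 : 4*r*Λ - 1 ≤ ‖(4*a*Complex.log a + 1)*(a*z)‖ := by
    rw [norm_mul, hnaz, mul_one]
    have h1 : ‖(4:ℂ)*a*Complex.log a‖ = 4*r*Λ := by
      rw [norm_mul, norm_mul, hnorm_a]
      simp [hΛ_def]
    have h2 : ‖(4:ℂ)*a*Complex.log a‖ - ‖(-1 : ℂ)‖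
        ≤ ‖(4:ℂ)*a*Complex.log a - (-1)‖ := norm_sub_norm_le _ _
    have h3 : ‖(-1 : ℂ)‖ = 1 := by simp
    have h4 : (4:ℂ)*a*Complex.log a - (-1) = 4*a*Complex.log a + 1 := by ring
    rw [h1, h3, h4] at h2
    linarith
  have hM2 : ‖(2*Complex.log a + 2)*(a*z)^2‖ ≤ 2*Λ + 2 := by
    rw [norm_mul, norm_pow, hnaz]
    have h1 : ‖(2:ℂ)*Complex.log a + 2‖ ≤ ‖(2:ℂ)*Complex.log a‖ + ‖(2:ℂ)‖ :=
      norm_add_le _ _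
    have h2 : ‖(2:ℂ)*Complex.log a‖ = 2*Λ := by
      rw [norm_mul]; simp [hΛ_def]
    have h3 : ‖(2:ℂ)‖ = 2 := by simp
    rw [h2, h3] at h1
    nlinarith [h1]
  -- conclusion
  have h6 : ‖(4*a*Complex.log a + 1)*(a*z)‖
      ≤ ‖u η - 2*(n:ℂ)‖ + ‖(2*Complex.log a + 2)*(a*z)^2‖ + ‖R‖ := by
    have e : (4*a*Complex.log a + 1)*(a*z)
        = (u η - 2*(n:ℂ)) - (2*Complex.log a + 2)*(a*z)^2 - R := by
      rw [hid, hR_def]; ring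
    rw [e]
    calc ‖(u η - 2*(n:ℂ)) - (2*Complex.log a + 2)*(a*z)^2 - R‖
        ≤ ‖(u η - 2*(n:ℂ)) - (2*Complex.log a + 2)*(a*z)^2‖ + ‖R‖ := norm_sub_le _ _
      _ ≤ ‖u η - 2*(n:ℂ)‖ + ‖(2*Complex.log a + 2)*(a*z)^2‖ + ‖R‖ := by
          gcongr ?_ + _; exact norm_sub_le _ _
  have habs_eq : ‖u η - 2*(n:ℂ)‖ = ‖u η - 2*(n:ℂ)‖ :=
    rfl
  constructor
  · rw [habs_eq]
    linarith [hM1, hM2, hRabs, h6]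
  · have h14 : 1/r < 1/4 := by
      rw [div_lt_div_iff₀ hr0 (by norm_num : (0:ℝ) < 4)]; linarith
    have hp : (0:ℝ) ≤ (4*r - 2)*(Λ - 1) := by
      apply mul_nonneg <;> linarith
    nlinarith [hp, h14]
end

section
/- Let V ⊂ ℂ be open, and f, g : V → ℂ holomorphic with: (a) there is B > 0 with |f(z) − g(z)| ≤ (B/|z|)|g(z)| on V; (b) there are 0 < c < C with c|z|log|z| ≤ |g'(z)/g(z)| ≤ C|z|log|z| on V (in particular g never vanishes); (c) there are r₀, ρ₀ > 0 such that every w ∈ V with (f(w) = 1 or g(w) = 1) and |w| > r₀ has closed disc D̄(w, ρ₀) ⊂ V. Then there exists R > 0 such that for every b ∈ V with g(b) = 1 and |b| > R, there is a unique a ∈ V with f(a) = 1 and |b − a| < |b|^{−2}. -/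
open Metric Set Filter
open scoped NNReal
set_option maxHeartbeats 2000000

private lemma mvt_aux {F F' : ℂ → ℂ} {s : Set ℂ} (hs : Convex ℝ s)
    (hd : ∀ z ∈ s, HasDerivAt F (F' z) z) {M : ℝ} (hM : ∀ z ∈ s, ‖F' z‖ ≤ M)
    {x y : ℂ} (hx : x ∈ s) (hy : y ∈ s) : ‖F y - F x‖ ≤ M * ‖y - x‖ := by
  have key : ∀ z ∈ s, ‖ContinuousLinearMap.smulRight (1 : ℂ →L[ℂ] ℂ) (F' z)‖ ≤ M := by
    intro z hz
    rw [ContinuousLinearMap.norm_smulRight_apply, norm_one, one_mul]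
    exact hM z hz
  simpa using hs.norm_image_sub_le_of_norm_hasFDerivWithin_le
    (fun z hz => (hd z hz).hasFDerivAt.hasFDerivWithinAt) key hx hy

private lemma conds_aux (B c C r₀ ρ₀ : ℝ) (hB : 0 < B) (hc : 0 < c) (hC : 0 < C)
    (hr₀ : 0 < r₀) (hρ₀ : 0 < ρ₀) :
    ∀ᶠ r in atTop,
      r₀ < r ∧ 2 + ρ₀ ≤ r ∧ 2*ρ₀ ≤ r ∧ 2*(r^2)⁻¹ ≤ ρ₀/2 ∧
      (C*(2*r)*Real.log (2*r)) * (2*(r^2)⁻¹) ≤ 1/2 ∧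
      2*(C*(2*r)*Real.log (2*r))^2*(r^2)⁻¹ + ((2*(C*(2*r)*Real.log (2*r))+1)/(ρ₀/2))*(r^2)⁻¹
        + 9*B*r ≤ 1/2*(c*r*Real.log r) ∧
      2*B/c < Real.log r ∧ (2:ℝ) ≤ r := by
  set K1 : ℝ := 54*B/c + 2*B/c + 2 with hK1
  set K2 : ℝ := 192*C^2/c + 16*C + 1 with hK2
  have hK2pos : 0 < K2 := by positivity
  have E1 : ∀ᶠ r in atTop, K1 ≤ Real.log r := Real.tendsto_log_atTop.eventually_ge_atTop K1
  have E2 : ∀ᶠ r in atTop, K2 * Real.log r ≤ r := by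
    have h := Real.isLittleO_log_id_atTop.def (show (0:ℝ) < K2⁻¹ by positivity)
    filter_upwards [h, eventually_ge_atTop (1:ℝ)] with r h1 h2
    have hl0 : 0 ≤ Real.log r := Real.log_nonneg h2
    rw [Real.norm_eq_abs, Real.norm_eq_abs, abs_of_nonneg hl0, id,
      abs_of_nonneg (by linarith : (0:ℝ) ≤ r)] at h1
    calc K2 * Real.log r ≤ K2 * (K2⁻¹ * r) := by
          exact mul_le_mul_of_nonneg_left h1 hK2pos.le
      _ = r := by field_simp
  have E3 : ∀ᶠ r in atTop,
      r₀ + 2 + ρ₀ + 2*ρ₀ + 4/ρ₀ + 24*(8*C+1)/(ρ₀*c) + 2 ≤ r := eventually_ge_atTop _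
  filter_upwards [E1, E2, E3] with r h1 h2 h3
  have hd1 : 0 < 4/ρ₀ := by positivity
  have hd2 : 0 < 24*(8*C+1)/(ρ₀*c) := by positivity
  have hr2 : (2:ℝ) ≤ r := by linarith
  have hr0 : (0:ℝ) < r := by linarith
  have hBc1 : 0 < 54*B/c := by positivity
  have hBc2 : 0 < 2*B/c := by positivity
  have hL1 : 1 ≤ Real.log r := by rw [hK1] at h1; linarith
  have hL0 : 0 ≤ Real.log r := by linarith
  set L : ℝ := Real.log r with hLdef
  have hL2 : Real.log (2*r) ≤ 2*L := by
    rw [Real.log_mul two_ne_zero (by positivity)]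
    have h2r : Real.log 2 ≤ L := by
      have := Real.log_le_log (by norm_num : (0:ℝ) < 2) hr2
      linarith
    linarith
  have hL2r0 : 0 ≤ Real.log (2*r) := Real.log_nonneg (by linarith)
  set u : ℝ := (r^2)⁻¹ with hudef
  have hu0 : 0 < u := by positivity
  have hu1 : u * r^2 = 1 := inv_mul_cancel₀ (by positivity)
  set W : ℝ := C*(2*r)*Real.log (2*r) with hWdef
  have hW0 : 0 ≤ W := by
    apply mul_nonneg (by positivity) hL2r0
  have hWb : W ≤ 4*C*r*L := by
    rw [hWdef]
    nlinarith [mul_le_mul_of_nonneg_left hL2 (show (0:ℝ) ≤ C*(2*r) by positivity)]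
  have h16 : 16*C*L ≤ r := by
    have : 16*C*L ≤ K2*L := by
      rw [hK2]
      nlinarith [mul_nonneg (show (0:ℝ) ≤ 192*C^2/c by positivity) hL0]
    linarith
  refine ⟨by linarith, by linarith, by linarith, ?_, ?_, ?_, ?_, hr2⟩
  · -- 2*u ≤ ρ₀/2
    have h4 : 4/ρ₀ ≤ r := by linarith
    have h4' : 4 ≤ r * ρ₀ := by rwa [div_le_iff₀ hρ₀] at h4
    have h5 : (4:ℝ) ≤ ρ₀ * r^2 := by nlinarith
    have heq : (ρ₀ * r^2/2) * u = ρ₀/2 := by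
      field_simp [hudef]
      linear_combination hu1
    nlinarith [mul_le_mul_of_nonneg_right (show (2:ℝ) ≤ ρ₀*r^2/2 by linarith) hu0.le]
  · -- W * (2*u) ≤ 1/2
    have P : 8*C*L*(r*u) ≤ (r/2)*(r*u) :=
      mul_le_mul_of_nonneg_right (by linarith) (by positivity)
    nlinarith [mul_le_mul_of_nonneg_right hWb (show (0:ℝ) ≤ 2*u by positivity)]
  · -- main sum
    have h192 : 192*C^2*L ≤ c*r := by
      have hstep : 192*C^2/c*L ≤ r := by
        refine le_trans ?_ h2
        rw [hK2]
        nlinarith [mul_nonneg hC.le hL0, hL0]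
      rw [div_mul_eq_mul_div, div_le_iff₀ hc] at hstep
      linarith
    have t1 : 2*W^2*u ≤ 1/6*(c*r*L) := by
      have hWsq : W^2 ≤ (4*C*r*L)^2 := pow_le_pow_left₀ hW0 hWb 2
      have h32 : 32*C^2*L^2 ≤ 1/6*(c*r*L) := by
        nlinarith [mul_le_mul_of_nonneg_right h192 hL0]
      have e1 : (4*C*r*L)^2*u = 16*C^2*L^2 := by
        field_simp [hudef]
        linear_combination 16*hu1
      linarith [mul_le_mul_of_nonneg_right hWsq hu0.le]
    have t2 : ((2*W+1)/(ρ₀/2))*u ≤ 1/6*(c*r*L) := by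
      have hrL1 : 1 ≤ r*L := by nlinarith
      have hWb' : 2*W+1 ≤ (8*C+1)*(r*L) := by nlinarith
      have hr24 : 24*(8*C+1)/(ρ₀*c) ≤ r := by linarith
      have hr24' : 24*(8*C+1) ≤ r * (ρ₀*c) := by
        rwa [div_le_iff₀ (by positivity)] at hr24
      rw [div_mul_eq_mul_div, div_le_iff₀ (by positivity : (0:ℝ) < ρ₀/2)]
      have key : ((8*C+1)*(r*L))*u ≤ 1/6*(c*r*L)*(ρ₀/2) := by
        have h12 : (8*C+1)*u*12 ≤ c*ρ₀ := by
          have hrr : r ≤ r^2 := by nlinarith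
          have : 24*(8*C+1) ≤ r^2*(ρ₀*c) := by
            nlinarith [mul_le_mul_of_nonneg_right hrr (by positivity : (0:ℝ) ≤ ρ₀*c)]
          nlinarith [mul_le_mul_of_nonneg_right this hu0.le]
        nlinarith [mul_nonneg (mul_nonneg hr0.le hL0) (by positivity : (0:ℝ) ≤ (8*C+1)*u)]
      nlinarith [mul_le_mul_of_nonneg_right hWb' hu0.le]
    have t3 : 9*B*r ≤ 1/6*(c*r*L) := by
      have h54 : 54*B ≤ c*L := by
        have h54' : 54*B/c ≤ L := by rw [hK1] at h1; linarith
        rw [div_le_iff₀ hc] at h54'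
        linarith
      nlinarith
    linarith
  · rw [hK1] at h1; linarith

theorem stmt_12 (V : Set ℂ) (hV : IsOpen V)
    (hVr : ∀ r : ℝ, 0 < r → ∃ z ∈ V, r < ‖z‖)
    (f g : ℂ → ℂ) (hf : DifferentiableOn ℂ f V) (hg : DifferentiableOn ℂ g V)
    (B : ℝ) (hB : 0 < B)
    (hfg : ∀ z ∈ V, ‖f z - g z‖ ≤ B / ‖z‖ * ‖g z‖)
    (c C : ℝ) (hc : 0 < c) (hcC : c < C)
    (hlog : ∀ z ∈ V,
      c * ‖z‖ * Real.log (‖z‖) ≤ ‖deriv g z / g z‖ ∧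
      ‖deriv g z / g z‖ ≤ C * ‖z‖ * Real.log (‖z‖))
    (r₀ ρ₀ : ℝ) (hr₀ : 0 < r₀) (hρ₀ : 0 < ρ₀)
    (hdisc : ∀ w ∈ V, (f w = 1 ∨ g w = 1) → r₀ < ‖w‖ →
      Metric.closedBall w ρ₀ ⊆ V) :
    ∃ R > (0 : ℝ), ∀ b ∈ V, g b = 1 → R < ‖b‖ →
      ∃! a : ℂ, a ∈ V ∧ f a = 1 ∧ ‖b - a‖ < (‖b‖ ^ 2)⁻¹ := by
  have hC : 0 < C := hc.trans hcC
  have habs_sub : ∀ x y : ℂ, ‖x - y‖ ≤ ‖x‖ + ‖y‖ := by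
    intro x y
    simpa using norm_sub_le x y
  have hgderiv : DifferentiableOn ℂ (deriv g) V :=
    ((hg.analyticOnNhd hV).deriv_of_isOpen hV).differentiableOn
  have hfd : ∀ z ∈ V, HasDerivAt f (deriv f z) z := fun z hz =>
    ((hf z hz).differentiableAt (hV.mem_nhds hz)).hasDerivAt
  have hgd : ∀ z ∈ V, HasDerivAt g (deriv g z) z := fun z hz =>
    ((hg z hz).differentiableAt (hV.mem_nhds hz)).hasDerivAt
  obtain ⟨R0, hR0⟩ := eventually_atTop.mp (conds_aux B c C r₀ ρ₀ hB hc hC hr₀ hρ₀)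
  refine ⟨max R0 1, lt_of_lt_of_le one_pos (le_max_right R0 1), ?_⟩
  intro b hbV hgb hrb
  set r := ‖b‖ with hrdef
  obtain ⟨c1, c2, c3, c4, c5, c6, c7, c8⟩ :=
    hR0 r (le_of_lt (lt_of_le_of_lt (le_max_left R0 1) hrb))
  have hr0 : (0:ℝ) < r := by linarith
  set L := Real.log r with hLdef
  have hL0 : 0 < L := Real.log_pos (by linarith)
  set δ : ℝ := (r^2)⁻¹ with hδdef
  have hδ0 : 0 < δ := by positivity
  set W : ℝ := C*(2*r)*Real.log (2*r) with hWdef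
  have hlog2r : 0 < Real.log (2*r) := Real.log_pos (by linarith)
  have hW0 : 0 < W := by rw [hWdef]; positivity
  have hDV : closedBall b ρ₀ ⊆ V := hdisc b hbV (Or.inr hgb) c1
  have hδρ : 2*δ ≤ ρ₀/2 := c4
  have hsub1 : closedBall b (2*δ) ⊆ closedBall b ρ₀ :=
    closedBall_subset_closedBall (by linarith)
  have hsubδ : closedBall b δ ⊆ closedBall b (2*δ) :=
    closedBall_subset_closedBall (by linarith)
  have hsubball : closedBall b δ ⊆ ball b ρ₀ :=
    closedBall_subset_ball (by linarith)
  have habs : ∀ ζ ∈ closedBall b ρ₀, 2 ≤ ‖ζ‖ ∧ ‖ζ‖ ≤ 2*r := by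
    intro ζ hζ
    rw [mem_closedBall, Complex.dist_eq] at hζ
    have key := abs_norm_sub_norm_le ζ b
    rw [abs_le] at key
    constructor
    · linarith [key.1]
    · linarith [key.2]
  have hgnz : ∀ ζ ∈ closedBall b ρ₀, g ζ ≠ 0 := by
    intro ζ hζ hzero
    have h2 := (hlog ζ (hDV hζ)).1
    rw [hzero, div_zero, norm_zero] at h2
    obtain ⟨ha2, -⟩ := habs ζ hζ
    have hlp : 0 < Real.log (‖ζ‖) := Real.log_pos (by linarith)
    nlinarith [mul_pos (mul_pos hc (show (0:ℝ) < ‖ζ‖ by linarith)) hlp]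
  have hwub : ∀ ζ ∈ closedBall b ρ₀, ‖deriv g ζ / g ζ‖ ≤ W := by
    intro ζ hζ
    obtain ⟨ha2, haub⟩ := habs ζ hζ
    refine le_trans (hlog ζ (hDV hζ)).2 ?_
    have hlogle : Real.log (‖ζ‖) ≤ Real.log (2*r) :=
      Real.log_le_log (by linarith) haub
    have hlogpos : 0 ≤ Real.log (‖ζ‖) := Real.log_nonneg (by linarith)
    rw [hWdef]
    linarith [mul_le_mul_of_nonneg_left
      (mul_le_mul haub hlogle hlogpos (by positivity : (0:ℝ) ≤ 2*r)) hC.le]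
  set lam := deriv g b with hlamdef
  have hlamlb : c*r*L ≤ ‖lam‖ := by
    have h := (hlog b hbV).1
    rwa [hgb, div_one] at h
  have hlam0 : 0 < ‖lam‖ := lt_of_lt_of_le (by positivity) hlamlb
  have hlamne : lam ≠ 0 := by
    intro h; rw [h, norm_zero] at hlam0; exact lt_irrefl 0 hlam0
  have hgle2 : ∀ ζ ∈ closedBall b (2*δ), ‖g ζ‖ ≤ 2 := by
    have hcont : ContinuousOn (fun z => ‖g z‖) (closedBall b (2*δ)) :=
      continuous_norm.comp_continuousOn (hg.continuousOn.mono (hsub1.trans hDV))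
    obtain ⟨z₀, hz₀K, hmax⟩ := (isCompact_closedBall b (2*δ)).exists_isMaxOn
      (nonempty_closedBall.mpr (by positivity)) hcont
    set M := ‖g z₀‖ with hMdef
    have hMb : ∀ ζ ∈ closedBall b (2*δ), ‖g ζ‖ ≤ M := fun ζ hζ => hmax hζ
    have hM0 : 0 ≤ M := norm_nonneg _
    have hgdb : ∀ ζ ∈ closedBall b (2*δ), ‖deriv g ζ‖ ≤ W*M := by
      intro ζ hζ
      have hne := hgnz ζ (hsub1 hζ)
      rw [show deriv g ζ = (deriv g ζ / g ζ) * g ζ from (div_mul_cancel₀ _ hne).symm, norm_mul]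
      exact mul_le_mul (hwub ζ (hsub1 hζ)) (hMb ζ hζ) (norm_nonneg _) hW0.le
    have hvar := mvt_aux (convex_closedBall b (2*δ))
      (fun z hz => hgd z (hDV (hsub1 hz))) hgdb
      (mem_closedBall_self (by positivity)) hz₀K
    have hdist : ‖z₀ - b‖ ≤ 2*δ := by
      rw [mem_closedBall, Complex.dist_eq] at hz₀K; exact hz₀K
    have htri : M ≤ 1 + ‖g z₀ - g b‖ := by
      have hh : g z₀ = g b + (g z₀ - g b) := by ring
      calc M = ‖g b + (g z₀ - g b)‖ := by rw [← hh]
        _ ≤ ‖g b‖ + ‖g z₀ - g b‖ := norm_add_le _ _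
        _ = 1 + ‖g z₀ - g b‖ := by rw [hgb, norm_one]
    have hM2 : M ≤ 2 := by
      have h1 : ‖g z₀ - g b‖ ≤ W*M*(2*δ) := by
        calc ‖g z₀ - g b‖ ≤ W*M * ‖z₀ - b‖ := hvar
          _ ≤ W*M*(2*δ) := mul_le_mul_of_nonneg_left hdist (by positivity)
      linarith [mul_le_mul_of_nonneg_right c5 hM0]
    exact fun ζ hζ => le_trans (hMb ζ hζ) hM2
  have hg'2 : ∀ ζ ∈ closedBall b (2*δ), ‖deriv g ζ‖ ≤ 2*W := by
    intro ζ hζ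
    have hne := hgnz ζ (hsub1 hζ)
    rw [show deriv g ζ = (deriv g ζ / g ζ) * g ζ from (div_mul_cancel₀ _ hne).symm, norm_mul]
    calc ‖deriv g ζ / g ζ‖ * ‖g ζ‖ ≤ W * 2 :=
          mul_le_mul (hwub ζ (hsub1 hζ)) (hgle2 ζ hζ) (norm_nonneg _) hW0.le
      _ = 2*W := by ring
  have hg1 : ∀ ζ ∈ closedBall b δ, ‖g ζ - 1‖ ≤ 2*W*δ := by
    intro ζ hζ
    have hvar := mvt_aux (convex_closedBall b δ)
      (fun z hz => hgd z (hDV (hsub1 (hsubδ hz))))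
      (fun z hz => hg'2 z (hsubδ hz)) (mem_closedBall_self hδ0.le) hζ
    have hdist : ‖ζ - b‖ ≤ δ := by
      rw [mem_closedBall, Complex.dist_eq] at hζ; exact hζ
    calc ‖g ζ - 1‖ = ‖g ζ - g b‖ := by rw [hgb]
      _ ≤ 2*W * ‖ζ - b‖ := hvar
      _ ≤ 2*W*δ := mul_le_mul_of_nonneg_left hdist (by positivity)
  have hp4 : ∀ ζ ∈ closedBall b (2*δ), ‖f ζ - g ζ‖ ≤ 4*B/r := by
    intro ζ hζ
    have hζV := hDV (hsub1 hζ)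
    have hge : r/2 ≤ ‖ζ‖ := by
      have hζ' := hsub1 hζ
      rw [mem_closedBall, Complex.dist_eq] at hζ'
      have key := abs_norm_sub_norm_le ζ b
      rw [abs_le] at key
      linarith [key.1]
    have h1 : B / ‖ζ‖ ≤ B/(r/2) :=
      div_le_div_of_nonneg_left hB.le (by linarith) hge
    have h2 : B/(r/2) = 2*B/r := by
      field_simp
    calc ‖f ζ - g ζ‖ ≤ B / ‖ζ‖ * ‖g ζ‖ := hfg ζ hζV
      _ ≤ (2*B/r) * 2 := by
          refine mul_le_mul (by rw [← h2]; exact h1) (hgle2 ζ hζ) (norm_nonneg _)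
            (by positivity)
      _ = 4*B/r := by ring
  have hp' : ∀ ζ ∈ closedBall b δ, ‖deriv (fun z => f z - g z) ζ‖ ≤ 9*B*r := by
    intro ζ hζ
    have hζ2 : ball ζ δ ⊆ closedBall b (2*δ) := by
      intro χ hχ
      rw [mem_ball] at hχ
      rw [mem_closedBall] at hζ ⊢
      calc dist χ b ≤ dist χ ζ + dist ζ b := dist_triangle _ _ _
        _ ≤ 2*δ := by linarith
    have hdiff : DifferentiableOn ℂ (fun z => f z - g z) (ball ζ δ) :=
      (hf.sub hg).mono ((hζ2.trans hsub1).trans hDV)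
    have hmaps : MapsTo (fun z => f z - g z) (ball ζ δ)
        (ball ((fun z => f z - g z) ζ) (9*B/r)) := by
      intro χ hχ
      rw [mem_ball, Complex.dist_eq]
      have h1 := hp4 χ (hζ2 hχ)
      have h2 := hp4 ζ (hsubδ hζ)
      have htri := habs_sub (f χ - g χ) (f ζ - g ζ)
      have hBr : 0 < B/r := by positivity
      have h8 : 4*B/r + 4*B/r = 8*(B/r) := by ring
      have h9 : 9*B/r = 9*(B/r) := by ring
      calc ‖(f χ - g χ) - (f ζ - g ζ)‖
          ≤ ‖f χ - g χ‖ + ‖f ζ - g ζ‖ := htri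
        _ < 9*B/r := by rw [h9]; linarith [h8]
    have hS := Complex.norm_deriv_le_div_of_mapsTo_ball hdiff (hmaps.mono_right ball_subset_closedBall) hδ0
    have heq : (9*B/r)/δ = 9*B*r := by
      rw [hδdef]
      field_simp
    rwa [heq] at hS
  set w := fun z => deriv g z / g z with hwdef
  have hBallV : ball b ρ₀ ⊆ V := ball_subset_closedBall.trans hDV
  have hwdiff : DifferentiableOn ℂ w (ball b ρ₀) :=
    (hgderiv.mono hBallV).div (hg.mono hBallV)
      (fun z hz => hgnz z (ball_subset_closedBall hz))
  set Kw := (2*W+1)/(ρ₀/2) with hKwdef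
  have hKwb : ∀ ζ ∈ closedBall b δ, ‖deriv w ζ‖ ≤ Kw := by
    intro ζ hζ
    have hρ2 : (0:ℝ) < ρ₀/2 := by linarith
    have hζδ : dist ζ b ≤ δ := by rwa [mem_closedBall] at hζ
    have hballsub : ball ζ (ρ₀/2) ⊆ ball b ρ₀ := by
      intro χ hχ
      rw [mem_ball] at hχ ⊢
      calc dist χ b ≤ dist χ ζ + dist ζ b := dist_triangle _ _ _
        _ < ρ₀/2 + δ := by linarith
        _ ≤ ρ₀ := by linarith
    have hmaps : MapsTo w (ball ζ (ρ₀/2)) (ball (w ζ) (2*W+1)) := by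
      intro χ hχ
      rw [mem_ball, Complex.dist_eq]
      have h1 : ‖w χ‖ ≤ W :=
        hwub χ (ball_subset_closedBall (hballsub hχ))
      have h2 : ‖w ζ‖ ≤ W :=
        hwub ζ (hsub1 (hsubδ hζ))
      calc ‖w χ - w ζ‖ ≤ ‖w χ‖ + ‖w ζ‖ := habs_sub _ _
        _ ≤ W + W := add_le_add h1 h2
        _ < 2*W+1 := by linarith
    have hS := Complex.norm_deriv_le_div_of_mapsTo_ball (hwdiff.mono hballsub) (hmaps.mono_right ball_subset_closedBall) hρ2
    exact hS
  have hwvar : ∀ ζ ∈ closedBall b δ, ‖w ζ - lam‖ ≤ Kw*δ := by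
    intro ζ hζ
    have hdw : ∀ z ∈ closedBall b δ, HasDerivAt w (deriv w z) z := fun z hz =>
      ((hwdiff z (hsubball hz)).differentiableAt (isOpen_ball.mem_nhds (hsubball hz))).hasDerivAt
    have hvar := mvt_aux (convex_closedBall b δ) hdw hKwb (mem_closedBall_self hδ0.le) hζ
    have hwb : w b = lam := by
      show deriv g b / g b = lam
      rw [hgb, div_one]
    have hdist : ‖ζ - b‖ ≤ δ := by
      rw [mem_closedBall, Complex.dist_eq] at hζ; exact hζ
    have hKw0 : 0 ≤ Kw := by rw [hKwdef]; positivity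
    calc ‖w ζ - lam‖ = ‖w ζ - w b‖ := by rw [hwb]
      _ ≤ Kw * ‖ζ - b‖ := hvar
      _ ≤ Kw*δ := mul_le_mul_of_nonneg_left hdist hKw0
  set Err := 2*W^2*δ + Kw*δ + 9*B*r with hErrdef
  have hErrlam : Err ≤ 1/2 * ‖lam‖ := by
    have h := c6
    linarith [hlamlb, hlam0]
  have hfErr : ∀ ζ ∈ closedBall b δ, ‖deriv f ζ - lam‖ ≤ Err := by
    intro ζ hζ
    have hζV : ζ ∈ V := hDV (hsub1 (hsubδ hζ))
    have hδp : deriv (fun z => f z - g z) ζ = deriv f ζ - deriv g ζ :=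
      deriv_sub ((hf ζ hζV).differentiableAt (hV.mem_nhds hζV))
        ((hg ζ hζV).differentiableAt (hV.mem_nhds hζV))
    have hne := hgnz ζ (hsub1 (hsubδ hζ))
    have hgeq : deriv g ζ = w ζ * g ζ := (div_mul_cancel₀ _ hne).symm
    have hid : deriv f ζ - lam =
        w ζ * (g ζ - 1) + (w ζ - lam) + deriv (fun z => f z - g z) ζ := by
      rw [hδp, hgeq]; ring
    rw [hid]
    calc ‖w ζ * (g ζ - 1) + (w ζ - lam) + deriv (fun z => f z - g z) ζ‖
        ≤ ‖w ζ * (g ζ - 1) + (w ζ - lam)‖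
          + ‖deriv (fun z => f z - g z) ζ‖ := norm_add_le _ _
      _ ≤ (‖w ζ * (g ζ - 1)‖ + ‖w ζ - lam‖) + 9*B*r :=
          add_le_add (norm_add_le _ _) (hp' ζ hζ)
      _ ≤ (W*(2*W*δ) + Kw*δ) + 9*B*r := by
          refine add_le_add_left (add_le_add ?_ (hwvar ζ hζ)) _
          rw [norm_mul]
          exact mul_le_mul (hwub ζ (hsub1 (hsubδ hζ))) (hg1 ζ hζ)
            (norm_nonneg _) hW0.le
      _ = Err := by rw [hErrdef]; ring
  set q := 2*B/(c*r^2*L) with hqdef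
  have hq0 : 0 < q := by rw [hqdef]; positivity
  have hqδ : q < δ := by
    rw [hqdef, hδdef, div_lt_iff₀ (by positivity : (0:ℝ) < c*r^2*L)]
    have heq : (r^2)⁻¹ * (c*r^2*L) = c*L := by field_simp
    rw [heq]
    have h2B : 2*B < L*c := (div_lt_iff₀ hc).mp c7
    linarith
  have hfb : ‖f b - 1‖ ≤ B/r := by
    have h := hfg b hbV
    rw [hgb, norm_one, mul_one] at h
    exact h
  set T := fun z : ℂ => z - (f z - 1)/lam with hTdef
  have hTd : ∀ ζ ∈ closedBall b δ, HasDerivAt T (1 - deriv f ζ/lam) ζ := by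
    intro ζ hζ
    have h1 := hfd ζ (hDV (hsub1 (hsubδ hζ)))
    have h2 := (hasDerivAt_id ζ).sub ((h1.sub_const 1).div_const lam)
    exact h2
  have hT'le : ∀ ζ ∈ closedBall b δ, ‖1 - deriv f ζ/lam‖ ≤ 1/2 := by
    intro ζ hζ
    have hid : (1 : ℂ) - deriv f ζ/lam = -((deriv f ζ - lam)/lam) := by
      field_simp
      ring
    rw [hid, norm_neg, norm_div, div_le_iff₀ hlam0]
    calc ‖deriv f ζ - lam‖ ≤ Err := hfErr ζ hζ
      _ ≤ 1/2 * ‖lam‖ := hErrlam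
  have hqball : closedBall b q ⊆ closedBall b δ := closedBall_subset_closedBall hqδ.le
  have hlip : ∀ x ∈ closedBall b q, ∀ y ∈ closedBall b q,
      ‖T y - T x‖ ≤ 1/2 * ‖y - x‖ := by
    intro x hx y hy
    exact mvt_aux (convex_closedBall b q) (fun z hz => hTd z (hqball hz))
      (fun z hz => hT'le z (hqball hz)) hx hy
  have hTbb : ‖T b - b‖ ≤ q/2 := by
    have h1 : T b - b = -((f b - 1)/lam) := by rw [hTdef]; ring
    rw [h1, norm_neg, norm_div]
    have h2 : ‖f b - 1‖ / ‖lam‖ ≤ (B/r)/(c*r*L) :=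
      div_le_div₀ (by positivity) hfb (by positivity) hlamlb
    have h3 : (B/r)/(c*r*L) = q/2 := by
      rw [hqdef]
      field_simp
    linarith
  have hmapsT : MapsTo T (closedBall b q) (closedBall b q) := by
    intro z hz
    rw [mem_closedBall, Complex.dist_eq]
    have h1 : ‖T z - T b‖ ≤ 1/2 * ‖z - b‖ :=
      hlip b (mem_closedBall_self hq0.le) z hz
    have h2 : ‖z - b‖ ≤ q := by
      rw [mem_closedBall, Complex.dist_eq] at hz; exact hz
    have h3 : T z - b = (T z - T b) + (T b - b) := by ring
    calc ‖T z - b‖ ≤ ‖T z - T b‖ + ‖T b - b‖ := by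
          rw [h3]; exact norm_add_le _ _
      _ ≤ q := by linarith
  have hcomplete : IsComplete (closedBall b q) := Metric.isClosed_closedBall.isComplete
  have hlipOn : LipschitzOnWith (1/2 : ℝ≥0) T (closedBall b q) := by
    apply LipschitzOnWith.of_dist_le_mul
    intro x hx y hy
    rw [Complex.dist_eq, Complex.dist_eq]
    calc ‖T x - T y‖ ≤ 1/2 * ‖x - y‖ := hlip y hy x hx
      _ = ((1/2 : ℝ≥0) : ℝ) * ‖x - y‖ := by norm_num
  have hcontr : ContractingWith (1/2) (hmapsT.restrict T _ _) :=
    ⟨by rw [← NNReal.coe_lt_coe]; push_cast; norm_num, hlipOn.mapsToRestrict hmapsT⟩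
  obtain ⟨a, haK, hfix, -, -⟩ := ContractingWith.exists_fixedPoint' hcomplete hmapsT hcontr
    (mem_closedBall_self hq0.le) (edist_ne_top _ _)
  have hfa1 : f a = 1 := by
    have h1 : a - (f a - 1)/lam = a := hfix
    have h2 : (f a - 1)/lam = 0 := sub_eq_self.mp h1
    rcases div_eq_zero_iff.mp h2 with h | h
    · exact sub_eq_zero.mp h
    · exact absurd h hlamne
  have haV : a ∈ V := hDV (hsub1 (hsubδ (hqball haK)))
  have habq : ‖b - a‖ < δ := by
    have h2 : ‖a - b‖ ≤ q := by
      rw [mem_closedBall, Complex.dist_eq] at haK; exact haK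
    have h3 : ‖b - a‖ = ‖a - b‖ := norm_sub_rev _ _
    rw [h3]; linarith
  have huniq : ∀ x y : ℂ, x ∈ closedBall b δ → y ∈ closedBall b δ →
      f x = 1 → f y = 1 → x = y := by
    intro x y hx hy hfx hfy
    have hdF : ∀ z ∈ closedBall b δ,
        HasDerivAt (fun z => f z - lam*z) (deriv f z - lam) z := by
      intro z hz
      have h1 := hfd z (hDV (hsub1 (hsubδ hz)))
      have h2 := h1.sub ((hasDerivAt_id z).const_mul lam)
      rw [mul_one] at h2
      exact h2
    have hbF : ∀ z ∈ closedBall b δ, ‖deriv f z - lam‖ ≤ 1/2*‖lam‖ :=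
      fun z hz => le_trans (hfErr z hz) hErrlam
    have key := mvt_aux (convex_closedBall b δ) hdF hbF hx hy
    have hval : (f y - lam*y) - (f x - lam*x) = lam*(x - y) := by rw [hfx, hfy]; ring
    rw [hval, norm_mul] at key
    have habsxy : ‖x - y‖ = ‖y - x‖ := norm_sub_rev _ _
    rw [habsxy] at key
    have h0 : ‖y - x‖ = 0 := by nlinarith [norm_nonneg (y - x), hlam0]
    have h1 := norm_eq_zero.mp h0
    exact (sub_eq_zero.mp h1).symm
  refine ⟨a, ⟨haV, hfa1, habq⟩, ?_⟩
  rintro y ⟨hyV, hfy, hyb⟩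
  refine huniq y a ?_ (hqball haK) hfy hfa1
  rw [mem_closedBall, Complex.dist_eq]
  have h4 : ‖y - b‖ = ‖b - y‖ := norm_sub_rev _ _
  rw [h4]
  exact hyb.le
end

section
/- Under hypotheses (a), (b), (c) of the preceding theorem, there exists R such that every zero of f(z) − 1 in V with |z| > R is a simple zero (i.e. f'(z) ≠ 0 there). -/
open Metric Complex Filter Set

/-- If `g` is differentiable on an open set, vanishes at `z₀` but not identically near `z₀`,
then `deriv g / g` cannot be bounded near `z₀`. -/
lemma aux_pole {U : Set ℂ} (hU : IsOpen U) {g : ℂ → ℂ} (hg : DifferentiableOn ℂ g U)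
    {z₀ : ℂ} (hz₀ : z₀ ∈ U) (hne : ¬ (∀ᶠ z in nhds z₀, g z = 0)) (hg0 : g z₀ = 0)
    {M : ℝ} (hM : ∀ᶠ z in nhds z₀, ‖deriv g z / g z‖ ≤ M) : False := by
  have hga : AnalyticAt ℂ g z₀ := hg.analyticAt (hU.mem_nhds hz₀)
  obtain ⟨n, h, hh, hh0, heq⟩ := hga.exists_eventuallyEq_pow_smul_nonzero_iff.mpr hne
  obtain ⟨m, rfl⟩ : ∃ m, n = m + 1 := by
    cases n with
    | zero =>
        exfalso
        have := heq.self_of_nhds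
        simp only [pow_zero, one_smul, hg0] at this
        exact hh0 this.symm
    | succ m => exact ⟨m, rfl⟩
  obtain ⟨s, hs_mem, hs_an⟩ := hh.exists_mem_nhds_analyticOnNhd
  have hz₀s : z₀ ∈ s := mem_of_mem_nhds hs_mem
  have hderivcont : ContinuousAt (deriv h) z₀ := (hs_an.deriv z₀ hz₀s).continuousAt
  set q : ℂ → ℂ := fun z => deriv h z / h z with hq
  have hqcont : ContinuousAt q z₀ := hderivcont.div hh.continuousAt hh0
  set K := ‖q z₀‖ with hK
  have hK0 : 0 ≤ K := norm_nonneg _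
  have hqb : ∀ᶠ z in nhds z₀, ‖q z‖ < K + 1 :=
    Filter.Tendsto.eventually_lt_const
      (show (norm ∘ q) z₀ < K + 1 by simp only [Function.comp_apply]; linarith)
      (continuous_norm.continuousAt.comp hqcont)
  set δ := (max M 0 + K + 2)⁻¹ with hδ
  have hmax : 0 ≤ max M 0 := le_max_right M 0
  have hδ0 : 0 < δ := by positivity
  have hball : ∀ᶠ z in nhds z₀, dist z z₀ < δ := by
    filter_upwards [Metric.ball_mem_nhds z₀ hδ0] with z hz using mem_ball.mp hz
  have hhne : ∀ᶠ z in nhds z₀, h z ≠ 0 := hh.continuousAt.eventually_ne hh0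
  have hhd : ∀ᶠ z in nhds z₀, DifferentiableAt ℂ h z := by
    filter_upwards [hs_mem] with z hz using (hs_an z hz).differentiableAt
  have hderiv_eq : deriv g =ᶠ[nhds z₀] deriv (fun z => (z - z₀) ^ (m + 1) * h z) := by
    apply Filter.EventuallyEq.deriv
    filter_upwards [heq] with z hz
    simpa [smul_eq_mul] using hz
  have hform : ∀ᶠ z in nhds z₀,
      deriv g z = ((m : ℂ) + 1) * (z - z₀) ^ m * h z + (z - z₀) ^ (m + 1) * deriv h z := by
    filter_upwards [hderiv_eq, hhd] with z h1 h2
    rw [h1]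
    have hp : HasDerivAt (fun w : ℂ => (w - z₀) ^ (m + 1)) (((m : ℂ) + 1) * (z - z₀) ^ m) z := by
      have := ((hasDerivAt_id z).sub_const z₀).pow (m + 1)
      simpa [Pi.pow_def] using this
    exact (hp.mul h2.hasDerivAt).deriv
  have hfin : ∀ᶠ z in nhdsWithin z₀ {z₀}ᶜ, False := by
    have hall := (hM.and (hqb.and (hhne.and (hform.and (heq.and hball))))).filter_mono
      (nhdsWithin_le_nhds (s := {z₀}ᶜ))
    filter_upwards [hall, self_mem_nhdsWithin] with z hz hzne
    obtain ⟨h1, h2, h3, h4, h5, h6⟩ := hz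
    have hzne' : z ≠ z₀ := hzne
    have hw : z - z₀ ≠ 0 := sub_ne_zero.mpr hzne'
    have hwpos : 0 < ‖z - z₀‖ := by
      simpa [norm_pos_iff] using hw
    have hgz : g z = (z - z₀) ^ (m + 1) * h z := by simpa [smul_eq_mul] using h5
    have key : deriv g z / g z = ((m : ℂ) + 1) / (z - z₀) + q z := by
      rw [h4, hgz, hq]
      field_simp
      ring
    have habs : ‖((m : ℂ) + 1) / (z - z₀)‖ ≤ M + (K + 1) := by
      have e : ((m : ℂ) + 1) / (z - z₀) = deriv g z / g z - q z := by rw [key]; ring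
      calc ‖((m : ℂ) + 1) / (z - z₀)‖
          = ‖deriv g z / g z - q z‖ := by rw [e]
        _ ≤ ‖deriv g z / g z‖ + ‖q z‖ := norm_sub_le _ _
        _ ≤ M + (K + 1) := by
                    exact add_le_add h1 h2.le
    have hlow : (1 : ℝ) / ‖z - z₀‖ ≤ ‖((m : ℂ) + 1) / (z - z₀)‖ := by
      rw [norm_div]
      have h1m : (1 : ℝ) ≤ ‖(m : ℂ) + 1‖ := by
        have e2 : ((m : ℂ) + 1) = ((m + 1 : ℕ) : ℂ) := by push_cast; ring
        rw [e2, Complex.norm_natCast]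
        exact_mod_cast Nat.one_le_iff_ne_zero.mpr (Nat.succ_ne_zero m)
      exact (div_le_div_iff_of_pos_right hwpos).mpr h1m
    have hdist : ‖z - z₀‖ < δ := by rwa [← Complex.dist_eq]
    have hbig : max M 0 + K + 2 < 1 / ‖z - z₀‖ := by
      have := one_div_lt_one_div_of_lt hwpos hdist
      rwa [hδ, one_div, inv_inv] at this
    have hMle : M ≤ max M 0 := le_max_left M 0
    linarith
  have hne2 : (nhdsWithin z₀ {z₀}ᶜ).NeBot := Module.punctured_nhds_neBot ℂ ℂ z₀
  obtain ⟨z, hz⟩ := hfin.exists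
  exact hz
theorem stmt_13 (V : Set ℂ) (hV : IsOpen V)
    (hVr : ∀ r : ℝ, 0 < r → ∃ z ∈ V, r < ‖z‖)
    (f g : ℂ → ℂ) (hf : DifferentiableOn ℂ f V) (hg : DifferentiableOn ℂ g V)
    (B : ℝ) (hB : 0 < B)
    (hfg : ∀ z ∈ V, ‖f z - g z‖ ≤ B / ‖z‖ * ‖g z‖)
    (c C : ℝ) (hc : 0 < c) (hcC : c < C)
    (hlog : ∀ z ∈ V,
      c * ‖z‖ * Real.log (‖z‖) ≤ ‖deriv g z / g z‖ ∧
      ‖deriv g z / g z‖ ≤ C * ‖z‖ * Real.log (‖z‖))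
    (r₀ ρ₀ : ℝ) (hr₀ : 0 < r₀) (hρ₀ : 0 < ρ₀)
    (hdisc : ∀ w ∈ V, (f w = 1 ∨ g w = 1) → r₀ < ‖w‖ →
      Metric.closedBall w ρ₀ ⊆ V) :
    ∃ R : ℝ, ∀ z ∈ V, f z = 1 → R < ‖z‖ → deriv f z ≠ 0 := by
  set r := ρ₀ / 2 with hrdef
  have hr0 : 0 < r := by positivity
  refine ⟨r₀ + 3 * ρ₀ + 2 * B + Real.exp 1 + 1 + 4 * B / (r * c), ?_⟩
  intro a ha hfa haR
  have hexp : 0 < Real.exp 1 := Real.exp_pos 1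
  have hBrc : 0 < 4 * B / (r * c) := by positivity
  have ha1 : 1 < ‖a‖ := by linarith
  have ha0 : 0 < ‖a‖ := by linarith
  have hball : Metric.closedBall a ρ₀ ⊆ V := hdisc a ha (Or.inl hfa) (by linarith)
  -- lower/upper bounds for |z| on the closed ball
  have hz_lb : ∀ z ∈ Metric.closedBall a ρ₀, ‖a‖ - ρ₀ ≤ ‖z‖ := by
    intro z hz
    have h1 : ‖a - z‖ ≤ ρ₀ := by
      rw [← dist_eq_norm, dist_comm]
      exact mem_closedBall.mp hz
    have h2 : ‖a‖ - ‖z‖ ≤ ‖a - z‖ := norm_sub_norm_le a z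
    linarith
  have hz_ub : ∀ z ∈ Metric.closedBall a ρ₀, ‖z‖ ≤ ‖a‖ + ρ₀ := by
    intro z hz
    have h1 : ‖z - a‖ ≤ ρ₀ := by rw [← dist_eq_norm]; exact mem_closedBall.mp hz
    have h2 : ‖z‖ - ‖a‖ ≤ ‖z - a‖ := norm_sub_norm_le z a
    linarith
  have hga0 : g a ≠ 0 := by
    intro h0
    have := hfg a ha
    rw [h0, hfa] at this
    simp only [sub_zero, map_one, map_zero, mul_zero, norm_one, norm_zero] at this
    linarith
  -- g has no zero in the closed ball of radius r around a
  have gnz : ∀ z ∈ Metric.closedBall a r, g z ≠ 0 := by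
    intro z₀ hz₀ h0
    have hrρ : r < ρ₀ := by rw [hrdef]; linarith
    have hz₀' : z₀ ∈ Metric.ball a ρ₀ := Metric.closedBall_subset_ball hrρ hz₀
    have hgb : DifferentiableOn ℂ g (Metric.ball a ρ₀) :=
      hg.mono (Metric.ball_subset_closedBall.trans hball)
    refine aux_pole Metric.isOpen_ball hgb hz₀' ?_ h0
      (M := C * ((‖a‖ + ρ₀) * Real.log (‖a‖ + ρ₀))) ?_
    · intro hev
      have han : AnalyticOnNhd ℂ g (Metric.ball a ρ₀) := hgb.analyticOnNhd Metric.isOpen_ball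
      have := han.eqOn_zero_of_preconnected_of_eventuallyEq_zero
        (convex_ball a ρ₀).isPreconnected hz₀' hev
      exact hga0 (this (Metric.mem_ball_self hρ₀))
    · filter_upwards [Metric.isOpen_ball.mem_nhds hz₀'] with z hz
      have hzc : z ∈ Metric.closedBall a ρ₀ := Metric.ball_subset_closedBall hz
      have hzV : z ∈ V := hball hzc
      have h1 : (1 : ℝ) ≤ ‖z‖ := by have := hz_lb z hzc; linarith
      have h2 : ‖z‖ ≤ ‖a‖ + ρ₀ := hz_ub z hzc
      have h3 : Real.log (‖z‖) ≤ Real.log (‖a‖ + ρ₀) :=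
        Real.log_le_log (by linarith) h2
      have h4 : 0 ≤ Real.log (‖z‖) := Real.log_nonneg h1
      have h5 := (hlog z hzV).2
      nlinarith [h5, mul_le_mul_of_nonneg_left h3 (le_of_lt (lt_trans hc hcC)),
        mul_le_mul_of_nonneg_right h2 h4]
  -- the function u = f/g - 1
  set O := Metric.ball a ρ₀ ∩ g ⁻¹' {(0 : ℂ)}ᶜ with hO_def
  have hOV : O ⊆ V := fun z hz => hball (Metric.ball_subset_closedBall hz.1)
  have hO : IsOpen O :=
    (hg.mono (Metric.ball_subset_closedBall.trans hball)).continuousOn.isOpen_inter_preimage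
      Metric.isOpen_ball isOpen_compl_singleton
  have hsubO : Metric.closedBall a r ⊆ O := fun z hz =>
    ⟨Metric.closedBall_subset_ball (by rw [hrdef]; linarith) hz, gnz z hz⟩
  set u : ℂ → ℂ := fun z => f z / g z - 1 with hu
  have hud : DifferentiableOn ℂ u O := by
    apply DifferentiableOn.sub_const
    exact (hf.mono hOV).div (hg.mono hOV) fun z hz => hz.2
  have hcl : DiffContOnCl ℂ u (Metric.ball a r) := by
    apply DifferentiableOn.diffContOnCl
    rw [closure_ball a hr0.ne']
    exact hud.mono hsubO
  have hsup : ∀ z ∈ Metric.sphere a r, ‖u z‖ ≤ 2 * B / ‖a‖ := by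
    intro z hz
    have hzr : z ∈ Metric.closedBall a r := Metric.sphere_subset_closedBall hz
    have hzc : z ∈ Metric.closedBall a ρ₀ :=
      Metric.closedBall_subset_closedBall (by rw [hrdef]; linarith) hzr
    have hzV : z ∈ V := hball hzc
    have hgz : g z ≠ 0 := gnz z hzr
    have hgzpos : 0 < ‖g z‖ := norm_pos_iff.mpr hgz
    have hzpos : 0 < ‖z‖ := by have := hz_lb z hzc; linarith
    have h1 : u z = (f z - g z) / g z := by rw [hu]; field_simp
    rw [h1]
    have h2 : ‖(f z - g z) / g z‖ = ‖f z - g z‖ / ‖g z‖ := by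
      rw [norm_div]
    rw [h2]
    have h3 := hfg z hzV
    have h4 : ‖f z - g z‖ / ‖g z‖ ≤ B / ‖z‖ := by
      rw [div_le_iff₀ hgzpos]
      exact h3
    refine h4.trans ?_
    rw [div_le_div_iff₀ hzpos ha0]
    have h5 := hz_lb z hzc
    nlinarith
  have hu' : ‖deriv u a‖ ≤ 2 * B / ‖a‖ / r :=
    Complex.norm_deriv_le_of_forall_mem_sphere_norm_le hr0 hcl hsup
  -- derivative formula
  have haO : O ∈ nhds a := hO.mem_nhds (hsubO (Metric.mem_closedBall_self hr0.le))
  have huA : DifferentiableAt ℂ u a := hud.differentiableAt haO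
  have hgA : DifferentiableAt ℂ g a := hg.differentiableAt (hV.mem_nhds ha)
  have heqf : f =ᶠ[nhds a] fun z => g z * (1 + u z) := by
    filter_upwards [haO] with z hz
    have hgz : g z ≠ 0 := hz.2
    rw [hu]
    field_simp
    ring
  have hD : HasDerivAt (fun z => g z * (1 + u z))
      (deriv g a * (1 + u a) + g a * deriv u a) a :=
    hgA.hasDerivAt.mul (huA.hasDerivAt.const_add 1)
  have hdf : deriv f a = deriv g a * (1 + u a) + g a * deriv u a :=
    heqf.deriv_eq.trans hD.deriv
  have hua : (1 : ℂ) + u a = (g a)⁻¹ := by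
    rw [hu]
    simp only [hfa]
    field_simp
    ring
  -- final estimates
  intro h0
  rw [h0] at hdf
  have e1 : deriv g a * (g a)⁻¹ = -(g a * deriv u a) := by
    rw [hua] at hdf
    linear_combination -hdf
  have e2 : ‖deriv g a / g a‖ = ‖g a * deriv u a‖ := by
    rw [div_eq_mul_inv, e1, norm_neg]
  have lb := (hlog a ha).1
  -- |g a| ≤ 2
  have hga2 : ‖g a‖ ≤ 2 := by
    have t1 := hfg a ha
    rw [hfa] at t1
    have t2 : ‖g a‖ - ‖(1 : ℂ)‖ ≤ ‖g a - 1‖ := norm_sub_norm_le _ _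
    have t3 : ‖g a - 1‖ = ‖(1 : ℂ) - g a‖ := norm_sub_rev _ _
    rw [t3] at t2
    simp only [norm_one] at t2
    have hBa : B / ‖a‖ ≤ 1 / 2 := by
      rw [div_le_div_iff₀ ha0 (by norm_num)]
      linarith
    have t4 : B / ‖a‖ * ‖g a‖ ≤ 1 / 2 * ‖g a‖ :=
      mul_le_mul_of_nonneg_right hBa (norm_nonneg _)
    have t5 : ‖(1 : ℂ)‖ = 1 := norm_one
    nlinarith [t1, t2]
  have hd : ‖deriv u a‖ ≤ 2 * B / ‖a‖ / r := by
    exact hu'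
  have ub : ‖g a * deriv u a‖ ≤ 2 * (2 * B / ‖a‖ / r) := by
    rw [norm_mul]
    exact mul_le_mul hga2 hd (norm_nonneg _) (by norm_num)
  have hlog1 : 1 ≤ Real.log (‖a‖) := by
    rw [Real.le_log_iff_exp_le ha0]
    linarith
  have final : c * ‖a‖ * Real.log (‖a‖) ≤ 2 * (2 * B / ‖a‖ / r) := by
    rw [e2] at lb
    exact lb.trans ub
  have s1 : c * ‖a‖ ≤ c * ‖a‖ * Real.log (‖a‖) := by
    nlinarith [mul_le_mul_of_nonneg_left hlog1 (show (0:ℝ) ≤ c * ‖a‖ by positivity)]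
  have s2 : 2 * (2 * B / ‖a‖ / r) = 4 * B / (‖a‖ * r) := by
    rw [div_div]
    ring
  have s3 : 4 * B / (‖a‖ * r) ≤ 4 * B / r := by
    rw [div_le_div_iff₀ (by positivity) hr0]
    nlinarith [mul_pos (mul_pos hB hr0) (sub_pos.mpr ha1)]
  have s4 : c * ‖a‖ ≤ 4 * B / r := by
    calc c * ‖a‖ ≤ c * ‖a‖ * Real.log (‖a‖) := s1
      _ ≤ 2 * (2 * B / ‖a‖ / r) := final
      _ = 4 * B / (‖a‖ * r) := s2
      _ ≤ 4 * B / r := s3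
  have s5 : 4 * B / (r * c) < ‖a‖ := by linarith
  have s6 : c * (4 * B / (r * c)) = 4 * B / r := by
    field_simp
  have s7 : c * (4 * B / (r * c)) < c * ‖a‖ := by
    exact mul_lt_mul_of_pos_left s5 hc
  rw [s6] at s7
  linarith
end

section
/- Let g be holomorphic on the closed disc D̄(b, |b|^{−3/2}) with g(b) = 1, |g(z)| ≤ 2 on the boundary |z−b| = |b|^{−3/2}, and |g'(b)| ≥ c|b|log|b|. Then for |b| sufficiently large (depending only on c) and for all z with |z − b| ≤ |b|^{−2}, one has |g(z) − 1| ≥ (c' |b| log|b|) |z − b| for some constant c' > 0 depending only on c; in particular b is the only solution of g(z) = 1 in the disc |z − b| ≤ |b|^{−2}, and it is simple. -/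
open Metric Real NNReal ENNReal

set_option maxHeartbeats 2000000 in
theorem stmt_15 (c : ℝ) (hc : 0 < c) :
    ∃ c' > (0 : ℝ), ∃ R > (0 : ℝ), ∀ b : ℂ, R < ‖b‖ →
      ∀ g : ℂ → ℂ,
        DifferentiableOn ℂ g (Metric.closedBall b (‖b‖ ^ (-(3 / 2) : ℝ))) →
        g b = 1 →
        (∀ z : ℂ, ‖z - b‖ = ‖b‖ ^ (-(3 / 2) : ℝ) →
          ‖g z‖ ≤ 2) →
        c * ‖b‖ * Real.log (‖b‖) ≤ ‖deriv g b‖ →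
        (∀ z : ℂ, ‖z - b‖ ≤ (‖b‖ ^ 2)⁻¹ →
          c' * ‖b‖ * Real.log (‖b‖) * ‖z - b‖ ≤
            ‖g z - 1‖) ∧
        (∀ z : ℂ, ‖z - b‖ ≤ (‖b‖ ^ 2)⁻¹ → g z = 1 → z = b) ∧
        deriv g b ≠ 0 := by
  refine ⟨c / 2, by positivity, max (Real.exp (8 / c)) 4, by positivity, ?_⟩
  intro b hb g hg hgb hbd hder
  set A : ℝ := ‖b‖ with hA
  have hA4 : (4 : ℝ) < A := lt_of_le_of_lt (le_max_right _ _) hb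
  have hA0 : (0 : ℝ) < A := by linarith
  have hA1 : (1 : ℝ) < A := by linarith
  have hlog : 8 / c < Real.log A :=
    (Real.lt_log_iff_exp_lt hA0).2 (lt_of_le_of_lt (le_max_left _ _) hb)
  have hlog0 : (0 : ℝ) < Real.log A := lt_trans (by positivity) hlog
  set R : ℝ := A ^ (-(3 / 2) : ℝ) with hRdef
  have hR0 : (0 : ℝ) < R := Real.rpow_pos_of_pos hA0 _
  have hcoe : ((R.toNNReal : ℝ≥0) : ℝ) = R := Real.coe_toNNReal _ hR0.le
  have hRnn0 : (0 : ℝ≥0) < R.toNNReal := by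
    rw [← NNReal.coe_lt_coe, hcoe]; exact hR0
  have hg' : DifferentiableOn ℂ g (Metric.closedBall b (R.toNNReal : ℝ)) := by
    rw [hcoe]; exact hg
  have hps := hg'.hasFPowerSeriesOnBall hRnn0
  rw [hcoe] at hps
  set p := cauchyPowerSeries g b R with hp
  -- bound on sup of ‖g‖ on the circle
  have hcirc : ∀ θ : ℝ, ‖g (circleMap b R θ)‖ ≤ 2 := by
    intro θ
    have : ‖circleMap b R θ - b‖ = R := by
      simp [circleMap_sub_center, norm_circleMap_zero, abs_of_pos hR0]
    simpa using hbd _ this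
  -- continuity of g on circle
  have hgc : Continuous fun θ : ℝ => g (circleMap b R θ) := by
    apply hg.continuousOn.comp_continuous (continuous_circleMap b R)
    intro θ
    exact sphere_subset_closedBall (circleMap_mem_sphere b hR0.le θ)
  -- coefficient bounds
  have hnorm : ∀ n : ℕ, ‖p n‖ ≤ 2 * (R⁻¹) ^ n := by
    intro n
    refine (norm_cauchyPowerSeries_le g b R n).trans ?_
    rw [abs_of_pos hR0]
    gcongr
    have hint : (∫ θ : ℝ in (0)..2 * π, ‖g (circleMap b R θ)‖) ≤
        ∫ _ : ℝ in (0)..2 * π, (2 : ℝ) := by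
      apply intervalIntegral.integral_mono_on Real.two_pi_pos.le
      · exact (hgc.norm.intervalIntegrable _ _)
      · exact intervalIntegrable_const
      · intro θ _; exact hcirc θ
    rw [intervalIntegral.integral_const, smul_eq_mul, sub_zero] at hint
    rw [inv_mul_le_iff₀ Real.two_pi_pos]
    linarith [hint]
  have hcoeff : ∀ n : ℕ, ‖p.coeff n‖ ≤ 2 * (R⁻¹) ^ n := by
    intro n
    refine le_trans ?_ (hnorm n)
    have h := (p n).le_opNorm (fun _ => (1 : ℂ))
    simp only [norm_one, Finset.prod_const, one_pow, mul_one] at h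
    exact h
  have hc0 : p.coeff 0 = 1 := by
    have := hps.coeff_zero (fun _ => (1 : ℂ))
    rw [hgb] at this
    exact this
  have hc1 : p.coeff 1 = deriv g b := (hps.hasFPowerSeriesAt.deriv).symm
  -- s = R⁻¹
  set s : ℝ := A ^ ((3 : ℝ) / 2) with hsdef
  have hs0 : (0 : ℝ) < s := Real.rpow_pos_of_pos hA0 _
  have hRs : R⁻¹ = s := by
    rw [hRdef, hsdef, ← Real.rpow_neg hA0.le]; norm_num
  have hs2 : s ^ (2 : ℕ) = A ^ (3 : ℝ) := by
    rw [hsdef, ← Real.rpow_natCast (A ^ ((3:ℝ)/2)) 2, ← Real.rpow_mul hA0.le]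
    norm_num
  have hs_half : (2 : ℝ) ≤ A ^ ((1 : ℝ) / 2) := by
    have h1 : (A ^ ((1:ℝ)/2)) ^ (2 : ℕ) = A := by
      rw [← Real.rpow_natCast (A ^ ((1:ℝ)/2)) 2, ← Real.rpow_mul hA0.le]
      norm_num
    nlinarith [Real.rpow_nonneg hA0.le ((1:ℝ)/2)]
  -- the key estimate
  have key : ∀ z : ℂ, ‖z - b‖ ≤ (A ^ 2)⁻¹ →
      c / 2 * A * Real.log A * ‖z - b‖ ≤ ‖g z - 1‖ := by
    intro z hz
    set w : ℂ := z - b with hw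
    have hwn : ‖w‖ ≤ (A ^ 2)⁻¹ := by exact hz
    have hA2 : (A ^ 2)⁻¹ = A ^ (-(2 : ℝ)) := by
      rw [Real.rpow_neg hA0.le, Real.rpow_two, sq]
    have hwR : ‖w‖ < R := by
      refine lt_of_le_of_lt hwn ?_
      rw [hA2, hRdef]
      exact (Real.rpow_lt_rpow_left_iff hA1).2 (by norm_num)
    have hmem : w ∈ Metric.eball (0 : ℂ) (R.toNNReal : ℝ≥0∞) := by
      rw [Metric.mem_eball, edist_zero_right]
      have hlt : ‖w‖₊ < R.toNNReal := by
        rw [← NNReal.coe_lt_coe, coe_nnnorm, hcoe]; exact hwR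
      exact_mod_cast ENNReal.coe_lt_coe.mpr hlt
    have hsum : HasSum (fun n : ℕ => p n fun _ => w) (g (b + w)) := hps.hasSum hmem
    have hbw : b + w = z := by rw [hw]; ring
    rw [hbw] at hsum
    have hsum' : HasSum (fun n : ℕ => w ^ n • p.coeff n) (g z) := by
      simpa [FormalMultilinearSeries.apply_eq_pow_smul_coeff] using hsum
    have htail : HasSum (fun n : ℕ => w ^ (n + 2) • p.coeff (n + 2))
        (g z - ∑ i ∈ Finset.range 2, w ^ i • p.coeff i) :=
      (hasSum_nat_add_iff' 2).2 hsum'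
    have hsum2 : ∑ i ∈ Finset.range 2, w ^ i • p.coeff i = 1 + deriv g b * w := by
      rw [Finset.sum_range_succ, Finset.sum_range_one, hc0, hc1]
      simp [smul_eq_mul]; ring
    rw [hsum2] at htail
    set q : ℝ := ‖w‖ * s with hq
    have hq0 : 0 ≤ q := mul_nonneg (norm_nonneg _) hs0.le
    have hqle : q ≤ 1 / 2 := by
      have h1 : q ≤ (A ^ 2)⁻¹ * s := mul_le_mul_of_nonneg_right hwn hs0.le
      have h2 : s * 2 ≤ A ^ 2 := by
        have heq : s * A ^ ((1:ℝ)/2) = A ^ (2:ℕ) := by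
          rw [hsdef, ← Real.rpow_add hA0, ← Real.rpow_natCast A 2]
          norm_num
        nlinarith [hs_half, hs0.le]
      have hA2' : (0:ℝ) < A ^ 2 := by positivity
      refine h1.trans ?_
      rw [inv_mul_le_iff₀ hA2']
      linarith
    have hq1 : q < 1 := lt_of_le_of_lt hqle (by norm_num)
    -- bound each tail term
    have hterm : ∀ n : ℕ, ‖w ^ (n + 2) • p.coeff (n + 2)‖ ≤ 2 * q ^ 2 * q ^ n := by
      intro n
      rw [norm_smul, norm_pow]
      calc ‖w‖ ^ (n + 2) * ‖p.coeff (n + 2)‖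
          ≤ ‖w‖ ^ (n + 2) * (2 * (R⁻¹) ^ (n + 2)) := by
            exact mul_le_mul_of_nonneg_left (hcoeff (n + 2)) (by positivity)
        _ = 2 * q ^ 2 * q ^ n := by
            rw [hRs, hq]; ring
    have hgeo : Summable (fun n : ℕ => 2 * q ^ 2 * q ^ n) :=
      (summable_geometric_of_lt_one hq0 hq1).mul_left _
    have hsummable : Summable (fun n : ℕ => ‖w ^ (n + 2) • p.coeff (n + 2)‖) :=
      Summable.of_nonneg_of_le (fun n => norm_nonneg _) hterm hgeo
    have hTbound : ‖g z - (1 + deriv g b * w)‖ ≤ 2 * q ^ 2 * (1 - q)⁻¹ := by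
      rw [← htail.tsum_eq]
      refine (norm_tsum_le_tsum_norm hsummable).trans ?_
      calc (∑' n, ‖w ^ (n + 2) • p.coeff (n + 2)‖)
          ≤ ∑' n, 2 * q ^ 2 * q ^ n := Summable.tsum_le_tsum hterm hsummable hgeo
        _ = 2 * q ^ 2 * (1 - q)⁻¹ := by
            rw [_root_.tsum_mul_left, tsum_geometric_of_lt_one hq0 hq1]
    have hqinv : (1 - q)⁻¹ ≤ 2 := by
      have h12 : (1:ℝ)/2 ≤ 1 - q := by linarith
      calc (1 - q)⁻¹ ≤ ((1:ℝ)/2)⁻¹ := by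
            apply inv_anti₀ (by norm_num) h12
        _ = 2 := by norm_num
    have hT4 : ‖g z - (1 + deriv g b * w)‖ ≤ 4 * A * ‖w‖ := by
      refine hTbound.trans ?_
      have h1 : 2 * q ^ 2 * (1 - q)⁻¹ ≤ 4 * q ^ 2 := by nlinarith [sq_nonneg q]
      refine h1.trans ?_
      have hq2 : q ^ 2 = ‖w‖ ^ 2 * A ^ (3:ℝ) := by
        rw [hq, mul_pow, hs2]
      rw [hq2]
      have hA3 : A ^ (3:ℝ) = A * A ^ 2 := by
        rw [show (3:ℝ) = ((3:ℕ):ℝ) by norm_num, Real.rpow_natCast]; ring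
      rw [hA3]
      have hwnn : (0:ℝ) ≤ ‖w‖ := norm_nonneg _
      have hwA : ‖w‖ * A ^ 2 ≤ 1 := by
        calc ‖w‖ * A ^ 2 ≤ (A ^ 2)⁻¹ * A ^ 2 := by
              exact mul_le_mul_of_nonneg_right hwn (by positivity)
          _ = 1 := by field_simp
      calc 4 * (‖w‖ ^ 2 * (A * A ^ 2)) = 4 * A * ‖w‖ * (‖w‖ * A ^ 2) := by ring
        _ ≤ 4 * A * ‖w‖ * 1 := by
            exact mul_le_mul_of_nonneg_left hwA (by positivity)
        _ = 4 * A * ‖w‖ := mul_one _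
    -- main inequality
    have hdw : ‖deriv g b * w‖ = ‖deriv g b‖ * ‖w‖ := norm_mul _ _
    have hder' : c * A * Real.log A ≤ ‖deriv g b‖ := by
      exact hder
    have htri : ‖deriv g b * w‖ - ‖g z - (1 + deriv g b * w)‖ ≤ ‖g z - 1‖ := by
      have hdecomp : g z - 1 = deriv g b * w + (g z - (1 + deriv g b * w)) := by ring
      rw [hdecomp]
      have h := norm_sub_norm_le (deriv g b * w) (-(g z - (1 + deriv g b * w)))
      rw [norm_neg, sub_neg_eq_add] at h
      exact h
    have hwnn : (0:ℝ) ≤ ‖w‖ := norm_nonneg _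
    have h8 : 8 / c ≤ Real.log A := hlog.le
    have hkey : c / 2 * A * Real.log A * ‖w‖ ≤ ‖deriv g b‖ * ‖w‖ - 4 * A * ‖w‖ := by
      have h1 : c * A * Real.log A * ‖w‖ ≤ ‖deriv g b‖ * ‖w‖ :=
        mul_le_mul_of_nonneg_right hder' hwnn
      have h2 : (8 : ℝ) ≤ c * Real.log A := by
        rw [div_le_iff₀ hc] at h8; linarith
      nlinarith [mul_nonneg (by linarith : (0:ℝ) ≤ c * Real.log A - 8)
        (mul_nonneg hA0.le hwnn)]
    linarith [htri, hT4, hkey, hdw.symm.le, hdw.le]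
  refine ⟨key, ?_, ?_⟩
  · intro z hz hgz
    have := key z hz
    rw [hgz, sub_self] at this
    simp only [norm_zero] at this
    have habs : ‖z - b‖ = 0 := by
      by_contra h
      have h0 : 0 < ‖z - b‖ :=
        lt_of_le_of_ne (norm_nonneg _) (Ne.symm h)
      nlinarith [mul_pos (mul_pos (mul_pos (half_pos hc) hA0) hlog0) h0]
    have hzb : z - b = 0 := by rwa [norm_eq_zero] at habs
    exact sub_eq_zero.mp hzb
  · intro h
    rw [h] at hder
    simp only [norm_zero] at hder
    nlinarith [mul_pos (mul_pos hc hA0) hlog0]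
end
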